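/- Fix p' ∈ ℝ₊₊^{2K} and let g_{p'}(w) := max{g₁(w), g_{2,p'}(w)}. Let w' ∈ ℝ₊₊^{2K} be the unique vector satisfying w' = λ'·f_{p'}(w') with g_{p'}(w') = 1 and λ' := 1/g_{p'}(f_{p'}(w')). Then w' is componentwise minimal among all optimal solutions: for every w ∈ ℝ₊^{2K} satisfying w ≥ λ'·f_{p'}(w) componentwise and g_{p'}(w) ≤ 1, one has w' ≤ w componentwise. -/
import Mathlib


/-- Interference at link `l`: `I_l(p, w) = ((Ṽ · diag(p) · w)_l + σ²) / v_l`. -/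
noncomputable def interf {K : ℕ} (V : Matrix (Fin (2 * K)) (Fin (2 * K)) ℝ)
    (v : Fin (2 * K) → ℝ) (σ2 : ℝ) (p w : Fin (2 * K) → ℝ) (l : Fin (2 * K)) : ℝ :=
  ((∑ j, V l j * (p j * w j)) + σ2) / v l

/-- `f_l(p, w) = d_l / (W₀ B log₂(1 + SINR_l(p, w)))` with `SINR_l = p_l / I_l(p, w)`. -/
noncomputable def rateF {K : ℕ} (V : Matrix (Fin (2 * K)) (Fin (2 * K)) ℝ)
    (v : Fin (2 * K) → ℝ) (σ2 W0 B : ℝ) (d : Fin (2 * K) → ℝ)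
    (p w : Fin (2 * K) → ℝ) (l : Fin (2 * K)) : ℝ :=
  d l / (W0 * B * Real.logb 2 (1 + p l / interf V v σ2 p w l))

/-- Load constraint `g₁(w) = ‖A w‖_∞`, where the 0/1 association matrix `A` with
exactly one 1 per column is encoded by the assignment map `asg` (link `l` is
associated to cell `asg l`). -/
noncomputable def gOne {K N : ℕ} (asg : Fin (2 * K) → Fin N) (w : Fin (2 * K) → ℝ) : ℝ :=
  ⨆ n : Fin N, ∑ l, if asg l = n then w l else 0

/-- Power constraint `g₂(w, p) = W₀ · max_j (A^{ext} diag(w) p)_j / p^{max}_j`, with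
the 0/1 matrix `A^{ext}` (one 1 per column) encoded by the assignment map `aext`. -/
noncomputable def gTwo {K N : ℕ} (aext : Fin (2 * K) → Fin (K + N))
    (pmax : Fin (K + N) → ℝ) (W0 : ℝ) (w p : Fin (2 * K) → ℝ) : ℝ :=
  W0 * ⨆ j : Fin (K + N), (∑ l, if aext l = j then w l * p l else 0) / pmax j

section Aux

variable {K : ℕ} (V : Matrix (Fin (2 * K)) (Fin (2 * K)) ℝ) (hV : ∀ i j, 0 ≤ V i j)
  (v : Fin (2 * K) → ℝ) (hv : ∀ i, 0 < v i) (σ2 : ℝ) (hσ2 : 0 < σ2)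
  (W0 B : ℝ) (hW0 : 0 < W0) (hB : 0 < B) (d : Fin (2 * K) → ℝ) (hd : ∀ i, 0 < d i)
  (p : Fin (2 * K) → ℝ) (hp : ∀ i, 0 < p i)

include hV hv hσ2 hp in
lemma interf_pos (w : Fin (2 * K) → ℝ) (hw : ∀ i, 0 ≤ w i) (l : Fin (2 * K)) :
    0 < interf V v σ2 p w l := by
  unfold interf
  apply div_pos _ (hv l)
  have : (0:ℝ) ≤ ∑ j, V l j * (p j * w j) :=
    Finset.sum_nonneg fun j _ => mul_nonneg (hV l j) (mul_nonneg (hp j).le (hw j))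
  linarith

include hV hv hσ2 hW0 hB hd hp in
lemma rateF_pos (w : Fin (2 * K) → ℝ) (hw : ∀ i, 0 ≤ w i) (l : Fin (2 * K)) :
    0 < rateF V v σ2 W0 B d p w l := by
  have hI := interf_pos V hV v hv σ2 hσ2 p hp w hw l
  exact div_pos (hd l) (mul_pos (mul_pos hW0 hB)
    (Real.logb_pos one_lt_two (by nlinarith [div_pos (hp l) hI])))

include hV hv hσ2 hW0 hB hd hp in
/-- Key inequality: if `w1 ≤ c • w2` componentwise with `c > 1`, then
`f(w1) < c · f(w2)` componentwise (monotonicity + strict scalability). -/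
lemma rateF_scale_lt (c : ℝ) (hc : 1 < c) (w1 w2 : Fin (2 * K) → ℝ)
    (hw1 : ∀ i, 0 ≤ w1 i) (hw2 : ∀ i, 0 ≤ w2 i) (hle : ∀ i, w1 i ≤ c * w2 i)
    (l : Fin (2 * K)) :
    rateF V v σ2 W0 B d p w1 l < c * rateF V v σ2 W0 B d p w2 l := by
  have hI1 := interf_pos V hV v hv σ2 hσ2 p hp w1 hw1 l
  have hI2 := interf_pos V hV v hv σ2 hσ2 p hp w2 hw2 l
  set I1 := interf V v σ2 p w1 l with hI1def
  set I2 := interf V v σ2 p w2 l with hI2def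
  -- strict scalability of interference: I1 < c * I2
  have hIlt : I1 < c * I2 := by
    have hsum : ∑ j, V l j * (p j * w1 j) ≤ c * ∑ j, V l j * (p j * w2 j) := by
      rw [Finset.mul_sum]
      refine Finset.sum_le_sum fun j _ => ?_
      have := mul_le_mul_of_nonneg_left (hle j)
        (mul_nonneg (hV l j) (hp j).le)
      nlinarith [this]
    have hS2 : (0:ℝ) ≤ ∑ j, V l j * (p j * w2 j) :=
      Finset.sum_nonneg fun j _ => mul_nonneg (hV l j) (mul_nonneg (hp j).le (hw2 j))
    rw [hI1def, hI2def]
    unfold interf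
    rw [mul_div_assoc', div_lt_div_iff_of_pos_right (hv l)]
    nlinarith
  -- SINRs
  set x := p l / I2 with hxdef
  have hx : 0 < x := div_pos (hp l) hI2
  have hs1 : x / c < p l / I1 := by
    have h1 : p l / (c * I2) < p l / I1 :=
      div_lt_div_of_pos_left (hp l) hI1 hIlt
    calc x / c = p l / (c * I2) := by rw [hxdef, div_div, mul_comm]
      _ < p l / I1 := h1
  have hxc : 0 < x / c := div_pos hx (by linarith)
  -- Bernoulli: 1 + x ≤ (1 + x/c)^c, hence logb 2 (1+x) ≤ c * logb 2 (1+x/c)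
  have hbern : 1 + x ≤ (1 + x / c) ^ c := by
    have := one_add_mul_self_le_rpow_one_add (s := x / c) (by linarith) (p := c) hc.le
    have hcx : c * (x / c) = x := by field_simp
    rwa [hcx] at this
  have hlog2 : Real.logb 2 (1 + x) ≤ c * Real.logb 2 (1 + x / c) := by
    have h1 : Real.logb 2 (1 + x) ≤ Real.logb 2 ((1 + x / c) ^ c) :=
      Real.logb_le_logb_of_le one_lt_two (by linarith) hbern
    have h2 : Real.logb 2 ((1 + x / c) ^ c) = c * Real.logb 2 (1 + x / c) := by
      unfold Real.logb
      rw [Real.log_rpow (by linarith)]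
      ring
    linarith [h2 ▸ h1]
  have hlogstrict : Real.logb 2 (1 + x / c) < Real.logb 2 (1 + p l / I1) :=
    Real.logb_lt_logb one_lt_two (by linarith) (by linarith)
  have hL2 : Real.logb 2 (1 + x) < c * Real.logb 2 (1 + p l / I1) := by
    have := mul_lt_mul_of_pos_left hlogstrict (show (0:ℝ) < c by linarith)
    linarith
  -- conclude
  have hL1pos : 0 < Real.logb 2 (1 + p l / I1) :=
    Real.logb_pos one_lt_two (by nlinarith [div_pos (hp l) hI1])
  have hL2pos : 0 < Real.logb 2 (1 + x) :=
    Real.logb_pos one_lt_two (by linarith)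
  show d l / (W0 * B * Real.logb 2 (1 + p l / I1))
      < c * (d l / (W0 * B * Real.logb 2 (1 + x)))
  rw [mul_div_assoc', div_lt_div_iff₀ (by positivity) (by positivity)]
  nlinarith [mul_pos (mul_pos hW0 hB) (hd l), mul_pos hW0 hB]

end Aux

/-- Proposition 1, minimality part: the normalized fixed point `w'`
of `f_{p'}` is componentwise minimal among all optimal solutions: every nonnegative
`w` with `w ≥ λ'·f_{p'}(w)` and `g_{p'}(w) ≤ 1` satisfies `w' ≤ w` componentwise. -/
theorem bandwidth_fixed_point_minimal (K N : ℕ) (hK : 1 ≤ K) (hN : 1 ≤ N)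
    (V : Matrix (Fin (2 * K)) (Fin (2 * K)) ℝ) (hV : ∀ i j, 0 ≤ V i j)
    (v : Fin (2 * K) → ℝ) (hv : ∀ i, 0 < v i)
    (σ2 : ℝ) (hσ2 : 0 < σ2) (W0 B : ℝ) (hW0 : 0 < W0) (hB : 0 < B)
    (d : Fin (2 * K) → ℝ) (hd : ∀ i, 0 < d i)
    (asg : Fin (2 * K) → Fin N) (aext : Fin (2 * K) → Fin (K + N))
    (pmax : Fin (K + N) → ℝ) (hpmax : ∀ j, 0 < pmax j)
    (p' : Fin (2 * K) → ℝ) (hp' : ∀ i, 0 < p' i)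
    (w' : Fin (2 * K) → ℝ) (hw' : ∀ i, 0 < w' i) (lam' : ℝ)
    (hlam' : lam' = 1 / max (gOne asg (fun l => rateF V v σ2 W0 B d p' w' l))
      (gTwo aext pmax W0 (fun l => rateF V v σ2 W0 B d p' w' l) p'))
    (hfix : ∀ l, w' l = lam' * rateF V v σ2 W0 B d p' w' l)
    (hunit : max (gOne asg w') (gTwo aext pmax W0 w' p') = 1) :
    ∀ w : Fin (2 * K) → ℝ, (∀ i, 0 ≤ w i) →
      (∀ l, lam' * rateF V v σ2 W0 B d p' w l ≤ w l) →
      max (gOne asg w) (gTwo aext pmax W0 w p') ≤ 1 →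
      ∀ l, w' l ≤ w l := by
  intro w hw hge _
  have i0 : Fin (2 * K) := ⟨0, by omega⟩
  have hrw : ∀ l, 0 < rateF V v σ2 W0 B d p' w l :=
    rateF_pos V hV v hv σ2 hσ2 W0 B hW0 hB d hd p' hp' w hw
  have hrw' : ∀ l, 0 < rateF V v σ2 W0 B d p' w' l :=
    rateF_pos V hV v hv σ2 hσ2 W0 B hW0 hB d hd p' hp' w' (fun i => (hw' i).le)
  have hlampos : 0 < lam' := by
    have h1 := hfix i0
    nlinarith [hw' i0, hrw' i0]
  have hwpos : ∀ l, 0 < w l := fun l =>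
    lt_of_lt_of_le (mul_pos hlampos (hrw l)) (hge l)
  obtain ⟨l0, -, hl0⟩ := Finset.exists_max_image Finset.univ
    (fun l => w' l / w l) ⟨i0, Finset.mem_univ i0⟩
  set c := w' l0 / w l0 with hcdef
  have hcpos : 0 < c := div_pos (hw' l0) (hwpos l0)
  have hle : ∀ l, w' l ≤ c * w l := fun l =>
    (div_le_iff₀ (hwpos l)).mp (hl0 l (Finset.mem_univ l))
  have hc1 : c ≤ 1 := by
    by_contra hc
    push_neg at hc
    have key := rateF_scale_lt V hV v hv σ2 hσ2 W0 B hW0 hB d hd p' hp'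
      c hc w' w (fun i => (hw' i).le) hw hle l0
    have h2 : w' l0 < c * w l0 := by
      calc w' l0 = lam' * rateF V v σ2 W0 B d p' w' l0 := hfix l0
        _ < lam' * (c * rateF V v σ2 W0 B d p' w l0) :=
            mul_lt_mul_of_pos_left key hlampos
        _ = c * (lam' * rateF V v σ2 W0 B d p' w l0) := by ring
        _ ≤ c * w l0 := mul_le_mul_of_nonneg_left (hge l0) hcpos.le
    have h3 : c * w l0 = w' l0 := by
      rw [hcdef, div_mul_cancel₀ _ (hwpos l0).ne']
    linarith
  intro l
  calc w' l ≤ c * w l := hle l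
    _ ≤ 1 * w l := mul_le_mul_of_nonneg_right hc1 (hw l)
    _ = w l := one_mul _
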